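/- Let C be a circuit in a supersolvable saturated matroid M with |C| ≥ 4. Then there exist distinct elements x, y ∈ C and an element z ∉ C such that {x,y,z} and (C−{x,y}) ∪ {z} are both circuits of M. In particular, every supersolvable saturated matroid is C-chordal. -/

import Mathlib

open Set

namespace Matroid

variable {α : Type*} {β : Type*}

/-- The rank of a set in a matroid: the supremum of sizes of independent subsets. -/
noncomputable def mRank (M : Matroid α) (X : Set α) : ℕ :=
  sSup {n : ℕ | ∃ I, M.Indep I ∧ I ⊆ X ∧ I.ncard = n}

/-- The rank of a matroid. -/
noncomputable def mRk (M : Matroid α) : ℕ := M.mRank M.E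

/-- A flat `F` is modular if `r F + r F' = r (F ∪ F') + r (F ∩ F')` for every flat `F'`. -/
def IsModularFlat (M : Matroid α) (F : Set α) : Prop :=
  M.IsFlat F ∧ ∀ F', M.IsFlat F' →
    M.mRank F + M.mRank F' = M.mRank (F ∪ F') + M.mRank (F ∩ F')

/-- A proper flat is a flat other than the ground set. -/
def IsProperFlat (M : Matroid α) (F : Set α) : Prop := M.IsFlat F ∧ F ≠ M.E

/-- A vertical cover is a pair of proper flats whose union is the ground set. -/
def VerticalCover (M : Matroid α) (F F' : Set α) : Prop :=
  M.IsProperFlat F ∧ M.IsProperFlat F' ∧ F ∪ F' = M.E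

/-- A modular cover is a vertical cover by two modular flats. -/
def ModularCover (M : Matroid α) (F F' : Set α) : Prop :=
  M.VerticalCover F F' ∧ M.IsModularFlat F ∧ M.IsModularFlat F'

/-- A matroid is round if it has no vertical cover. -/
def Round (M : Matroid α) : Prop := ∀ F F', ¬ M.VerticalCover F F'

/-- A subset of the ground set is round if the restriction to it is round. -/
def RoundSet (M : Matroid α) (X : Set α) : Prop := X ⊆ M.E ∧ (M ↾ X).Round

/-- A rotunda is a maximal round flat. -/
def Rotunda (M : Matroid α) (R : Set α) : Prop :=
  M.IsFlat R ∧ M.RoundSet R ∧ ∀ R', M.IsFlat R' → M.RoundSet R' → R ⊆ R' → R' = R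

/-- A matroid of rank `r` is supersolvable if there is a chain of modular flats
`F 0 ⊆ F 1 ⊆ ⋯ ⊆ F r` with `r (F i) = i` for each `i`. -/
def Supersolvable (M : Matroid α) : Prop :=
  ∃ F : ℕ → Set α, (∀ i ≤ M.mRk, M.IsModularFlat (F i) ∧ M.mRank (F i) = i) ∧
    ∀ i < M.mRk, F i ⊆ F (i + 1)

/-- A matroid is saturated if every round flat is modular. -/
def Saturated (M : Matroid α) : Prop :=
  ∀ F, M.IsFlat F → M.RoundSet F → M.IsModularFlat F

/-- A circuit: a minimal dependent subset of the ground set. -/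
def Circ (M : Matroid α) (C : Set α) : Prop :=
  C ⊆ M.E ∧ ¬ M.Indep C ∧ ∀ D ⊂ C, M.Indep D

/-- A matroid is connected if it is non-empty and every two distinct elements lie in a
common circuit. -/
def ConnectedM (M : Matroid α) : Prop :=
  M.E.Nonempty ∧ ∀ x ∈ M.E, ∀ y ∈ M.E, x = y ∨ ∃ C, M.Circ C ∧ x ∈ C ∧ y ∈ C

/-- A hyperplane: a flat of rank `r M - 1`. -/
def IsHyperplane (M : Matroid α) (H : Set α) : Prop :=
  M.IsFlat H ∧ M.mRank H + 1 = M.mRk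

/-- The union of the projections `P_H(x, y) = H ∩ cl (x ∪ y)` onto the modular hyperplane `H`,
taken over all pairs of distinct rank-one flats `x = cl {a}`, `y = cl {b}` spanned by
elements `a, b` of `X`. -/
def projUnion (M : Matroid α) (H X : Set α) : Set α :=
  ⋃ a ∈ X, ⋃ b ∈ X, ⋃ (_ : M.closure {a} ≠ M.closure {b}), H ∩ M.closure {a, b}

/-- Two elements are related if they are equal or lie in a common circuit; the connected
components of a matroid are the restrictions to the equivalence classes of this relation. -/
def connRel (M : Matroid α) (x y : α) : Prop :=
  x = y ∨ ∃ C, M.Circ C ∧ x ∈ C ∧ y ∈ C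

/-- The rotunda graph of a matroid: vertices are the rotunda; two rotunda are adjacent if
they intersect and there is a modular cover separating them at their intersection. -/
def rotundaGraph (M : Matroid α) : SimpleGraph {R : Set α // M.Rotunda R} where
  Adj R₁ R₂ := R₁ ≠ R₂ ∧ (R₁.1 ∩ R₂.1).Nonempty ∧
    ∃ F₁ F₂, M.ModularCover F₁ F₂ ∧ R₁.1 ⊆ F₁ ∧ R₂.1 ⊆ F₂ ∧ F₁ ∩ F₂ = R₁.1 ∩ R₂.1
  symm := by
    constructor
    rintro a b ⟨hne, hint, F₁, F₂, ⟨⟨hp1, hp2, hu⟩, hm1, hm2⟩, h1, h2, hi⟩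
    refine ⟨hne.symm, by rwa [Set.inter_comm], F₂, F₁,
      ⟨⟨hp2, hp1, by rwa [Set.union_comm]⟩, hm2, hm1⟩, h2, h1, ?_⟩
    rw [Set.inter_comm, hi, Set.inter_comm]
  loopless := ⟨fun a h => h.1 rfl⟩

/-- A rotunda tree of `M`: a tree on the rotunda of `M` such that for each element `x` of the
ground set, the rotunda containing `x` induce a (nonempty) subtree. -/
def IsRotundaTree (M : Matroid α) (T : SimpleGraph {R : Set α // M.Rotunda R}) : Prop :=
  T.IsTree ∧ ∀ x ∈ M.E, (T.induce {t : {R : Set α // M.Rotunda R} | x ∈ t.1}).Connected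

/-- A legitimate weighting of `M`: zero on the empty set, and strictly monotone under proper
inclusion on the set consisting of `∅` and the pairwise intersections of distinct rotunda. -/
def LegitimateWeighting (M : Matroid α) (σ : Set α → ℕ) : Prop :=
  σ ∅ = 0 ∧
  ∀ X X' : Set α,
    (X = ∅ ∨ ∃ R R', M.Rotunda R ∧ M.Rotunda R' ∧ R ≠ R' ∧ X = R ∩ R') →
    (X' = ∅ ∨ ∃ R R', M.Rotunda R ∧ M.Rotunda R' ∧ R ≠ R' ∧ X' = R ∩ R') →
    X ⊂ X' → σ X < σ X'

/-- The total weight of a graph on the rotunda of `M`, where the edge joining rotunda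
`R` and `R'` gets weight `σ (R ∩ R')`. -/
noncomputable def treeWeight {M : Matroid α} (σ : Set α → ℕ)
    (T : SimpleGraph {R : Set α // M.Rotunda R}) : ℕ :=
  ∑ᶠ e ∈ T.edgeSet,
    Sym2.lift ⟨fun a b => σ (a.1 ∩ b.1), fun a b => by simp [Set.inter_comm]⟩ e

/-- A tree-decomposition of a matroid: a tree together with bags covering the ground set. -/
def IsTreeDecomp (M : Matroid α) (T : SimpleGraph β) (τ : β → Set α) : Prop :=
  T.IsTree ∧ ∀ x ∈ M.E, ∃ t, x ∈ τ t

/-- The node-width of a node `t` in a tree-decomposition `(T, τ)` of `M`: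
`(Σ_i r (τ t ∪ ⋃_{k ≠ i} F_k)) − (d − 1) · r M`, where `F_1, …, F_d` are the unions of the
bags over the connected components of `T − t`. -/
noncomputable def nodeWidth (M : Matroid α) (T : SimpleGraph β) (τ : β → Set α) (t : β) : ℤ :=
  (∑ᶠ c : (T.induce {s : β | s ≠ t}).ConnectedComponent,
      (M.mRank (τ t ∪ ⋃ (s : {s : β // s ≠ t})
        (_ : (T.induce {s : β | s ≠ t}).connectedComponentMk s ≠ c), τ s.1) : ℤ))
    - ((Nat.card (T.induce {s : β | s ≠ t}).ConnectedComponent : ℤ) - 1) * (M.mRk : ℤ)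

/-- The width of a tree-decomposition: the maximum node-width. -/
noncomputable def decompWidth (M : Matroid α) (T : SimpleGraph β) (τ : β → Set α) : ℤ :=
  sSup (Set.range (M.nodeWidth T τ))

/-- The tree-width of a matroid: the minimum width of a (finite) tree-decomposition. -/
noncomputable def treeWidth (M : Matroid α) : ℕ :=
  sInf {n : ℕ | ∃ (β : Type) (T : SimpleGraph β) (τ : β → Set α),
    Finite β ∧ M.IsTreeDecomp T τ ∧ ∀ t, M.nodeWidth T τ t ≤ (n : ℤ)}

end Matroid

namespace SimpleGraph

/-- A graph is chordal if every cycle with at least four edges has a chord: an edge of the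
graph joining two vertices of the cycle that is not an edge of the cycle. -/
def IsChordal {V : Type*} (G : SimpleGraph V) : Prop :=
  ∀ ⦃v : V⦄ (w : G.Walk v v), w.IsCycle → 4 ≤ w.length →
    ∃ x y, x ∈ w.support ∧ y ∈ w.support ∧ G.Adj x y ∧ s(x, y) ∉ w.edges

/-- A maximal clique of a graph. -/
def MaxClique {V : Type*} (G : SimpleGraph V) (C : Set V) : Prop :=
  G.IsClique C ∧ ∀ D, G.IsClique D → C ⊆ D → D = C

/-- The reduced clique graph of a graph: vertices are the maximal cliques; two maximal
cliques are adjacent if they intersect and every walk from one side to the other passes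
through their intersection. -/
def reducedCliqueGraph {V : Type*} (G : SimpleGraph V) :
    SimpleGraph {C : Set V // G.MaxClique C} where
  Adj C₁ C₂ := C₁ ≠ C₂ ∧ (C₁.1 ∩ C₂.1).Nonempty ∧
    ∀ u ∈ C₁.1 \ C₂.1, ∀ v ∈ C₂.1 \ C₁.1, ∀ p : G.Walk u v,
      ∃ z ∈ p.support, z ∈ C₁.1 ∩ C₂.1
  symm := by
    constructor
    rintro a b ⟨hne, hint, hsep⟩
    refine ⟨hne.symm, by rwa [Set.inter_comm], fun u hu v hv p => ?_⟩
    obtain ⟨z, hz, hz2⟩ := hsep v hv u hu p.reverse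
    refine ⟨z, ?_, by rwa [Set.inter_comm]⟩
    simpa [SimpleGraph.Walk.support_reverse] using hz
  loopless := ⟨fun a h => h.1 rfl⟩

end SimpleGraph

open Matroid

namespace Matroid

variable {α : Type*} {M : Matroid α} {I J X Y F F₁ F₂ C : Set α} {e : α}

lemma flat_closure' (M : Matroid α) (X : Set α) : M.IsFlat (M.closure X) := by
  have hne : Nonempty ({F : Set α | M.IsFlat F ∧ X ∩ M.E ⊆ F} : Set (Set α)) :=
    ⟨⟨M.E, M.ground_isFlat, inter_subset_right⟩⟩
  rw [closure_def, sInter_eq_iInter]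
  exact IsFlat.iInter fun F ↦ F.2.1

lemma mRank_eq_ncard_of_basis' [M.Finite] (hI : M.IsBasis' I X) : M.mRank X = I.ncard := by
  have hset : {n : ℕ | ∃ J, M.Indep J ∧ J ⊆ X ∧ J.ncard = n} = Set.Iic I.ncard := by
    apply subset_antisymm
    · rintro n ⟨J, hJ, hJX, rfl⟩
      obtain ⟨K, hK, hJK⟩ := hJ.subset_isBasis'_of_subset hJX
      have hKI : K.ncard = I.ncard :=
        (isBase_restrict_iff'.2 hK).ncard_eq_ncard_of_isBase (isBase_restrict_iff'.2 hI)
      exact le_trans (Set.ncard_le_ncard hJK (M.set_finite K hK.indep.subset_ground)) hKI.le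
    · rintro n (hn : n ≤ I.ncard)
      obtain ⟨J, hJI, hJn⟩ := Set.exists_subset_card_eq (s := I) hn
      exact ⟨J, hI.indep.subset hJI, hJI.trans hI.subset, hJn⟩
  rw [mRank, hset, csSup_Iic]

lemma Indep.mRank_eq [M.Finite] (hI : M.Indep I) : M.mRank I = I.ncard :=
  mRank_eq_ncard_of_basis' hI.isBasis_self.isBasis'

lemma mRank_mono [M.Finite] (h : X ⊆ Y) : M.mRank X ≤ M.mRank Y := by
  obtain ⟨I, hI⟩ := M.exists_isBasis' X
  obtain ⟨J, hJ, hIJ⟩ := hI.indep.subset_isBasis'_of_subset (hI.subset.trans h)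
  rw [mRank_eq_ncard_of_basis' hI, mRank_eq_ncard_of_basis' hJ]
  exact Set.ncard_le_ncard hIJ (M.set_finite J hJ.indep.subset_ground)

lemma mRank_closure_eq [M.Finite] (X : Set α) : M.mRank (M.closure X) = M.mRank X := by
  obtain ⟨I, hI⟩ := M.exists_isBasis' X
  rw [mRank_eq_ncard_of_basis' hI, mRank_eq_ncard_of_basis' hI.isBasis_closure_right.isBasis']

lemma mRank_insert_of_not_mem_closure [M.Finite] (hX : X ⊆ M.E) (he : e ∈ M.E)
    (hecl : e ∉ M.closure X) : M.mRank (insert e X) = M.mRank X + 1 := by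
  obtain ⟨I, hI⟩ := M.exists_isBasis X hX
  have hIcl : M.closure I = M.closure X := hI.closure_eq_closure
  have heI : e ∉ I := fun h => hecl (hIcl ▸ M.mem_closure_of_mem h hI.indep.subset_ground)
  have hind : M.Indep (insert e I) :=
    (hI.indep.insert_indep_iff_of_notMem heI).2 ⟨he, fun h => hecl (hIcl ▸ h)⟩
  have hbas : M.IsBasis (insert e I) (insert e X) :=
    hind.isBasis_of_subset_of_subset_closure (insert_subset_insert hI.subset)
      (insert_subset (M.mem_closure_of_mem (mem_insert _ _) hind.subset_ground)
        (hI.subset_closure.trans (M.closure_subset_closure (subset_insert _ _))))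
  rw [mRank_eq_ncard_of_basis' hbas.isBasis', mRank_eq_ncard_of_basis' hI.isBasis',
    Set.ncard_insert_of_notMem heI (M.set_finite I hI.indep.subset_ground)]

lemma exists_nonloop_of_one_le_mRank [M.Finite] (h : 1 ≤ M.mRank X) :
    ∃ z ∈ X, M.Indep {z} := by
  obtain ⟨I, hI⟩ := M.exists_isBasis' X
  rw [mRank_eq_ncard_of_basis' hI] at h
  have hne : I.Nonempty := Set.nonempty_of_ncard_ne_zero (by omega)
  obtain ⟨z, hz⟩ := hne
  exact ⟨z, hI.subset hz, hI.indep.subset (by simpa using hz)⟩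

lemma Flat.eq_of_subset_of_mRank_le [M.Finite] (hF₁ : M.IsFlat F₁) (hF₂ : M.IsFlat F₂)
    (hss : F₁ ⊆ F₂) (hr : M.mRank F₂ ≤ M.mRank F₁) : F₁ = F₂ := by
  obtain ⟨I, hI⟩ := M.exists_isBasis F₁ hF₁.subset_ground
  obtain ⟨J, hJ, hIJ⟩ := hI.indep.subset_isBasis_of_subset (hI.subset.trans hss) hF₂.subset_ground
  rw [mRank_eq_ncard_of_basis' hJ.isBasis', mRank_eq_ncard_of_basis' hI.isBasis'] at hr
  have hIJ' : I = J := Set.eq_of_subset_of_ncard_le hIJ hr (M.set_finite J hJ.indep.subset_ground)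
  refine hss.antisymm ?_
  calc F₂ ⊆ M.closure J := hJ.subset_closure
    _ = M.closure F₁ := by rw [← hIJ', hI.closure_eq_closure]
    _ = F₁ := hF₁.closure

lemma circ_of_forall_diff (hS : C ⊆ M.E) (hdep : ¬ M.Indep C)
    (h : ∀ s ∈ C, M.Indep (C \ {s})) : M.Circ C := by
  refine ⟨hS, hdep, fun D hD => ?_⟩
  obtain ⟨s, hsC, hsD⟩ := Set.exists_of_ssubset hD
  exact (h s hsC).subset (subset_diff_singleton hD.subset hsD)

end Matroid



set_option maxHeartbeats 2000000 in
/-- Every circuit of size at least four in a supersolvable saturated matroid has a pair of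
distinct elements `x, y` and an element `z ∉ C` with `{x, y, z}` and `(C − {x, y}) ∪ {z}`
both circuits; in particular, every supersolvable saturated matroid is C-chordal. -/
theorem supersolvable_saturated_circuit_chord {α : Type*} (M : Matroid α) [M.Finite]
    (hss : M.Supersolvable) (hsat : M.Saturated)
    (C : Set α) (hC : M.Circ C) (hcard : 4 ≤ C.ncard) :
    (∃ x ∈ C, ∃ y ∈ C, x ≠ y ∧ ∃ z ∉ C,
      M.Circ {x, y, z} ∧ M.Circ (insert z (C \ {x, y}))) ∧
    (∃ z ∉ C, ∃ A B : Set α, A ∪ B = C ∧ Disjoint A B ∧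
      M.Circ (insert z A) ∧ M.Circ (insert z B)) := by
  classical
  have hCE : C ⊆ M.E := hC.1
  have hCfin : C.Finite := M.set_finite C hCE
  -- basic circuit facts
  have hdiff_indep : ∀ c ∈ C, M.Indep (C \ {c}) := by
    intro c hc
    refine hC.2.2 _ ((ssubset_iff_of_subset diff_subset).2 ⟨c, hc, by simp⟩)
  have hmem_cl : ∀ c ∈ C, c ∈ M.closure (C \ {c}) := by
    intro c hc
    by_contra h
    have hind : M.Indep (insert c (C \ {c})) :=
      ((hdiff_indep c hc).insert_indep_iff_of_notMem (by simp)).2 ⟨hCE hc, h⟩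
    rw [insert_diff_singleton, insert_eq_of_mem hc] at hind
    exact hC.2.1 hind
  have hrC : M.mRank C = C.ncard - 1 := by
    obtain ⟨c, hc⟩ := Set.nonempty_of_ncard_ne_zero (s := C) (by omega)
    have hbas : M.IsBasis (C \ {c}) C :=
      (hdiff_indep c hc).isBasis_of_subset_of_subset_closure diff_subset (by
        intro b hb
        by_cases hbc : b = c
        · exact hbc ▸ hmem_cl c hc
        · exact M.mem_closure_of_mem ⟨hb, hbc⟩ ((diff_subset).trans hCE))
    rw [mRank_eq_ncard_of_basis' hbas.isBasis', Set.ncard_diff_singleton_of_mem hc]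
  -- the supersolvable chain
  obtain ⟨F, hFmod, hFchain⟩ := hss
  have hFtop : F M.mRk = M.E := by
    refine Flat.eq_of_subset_of_mRank_le (hFmod M.mRk le_rfl).1.1 M.ground_isFlat
      (hFmod M.mRk le_rfl).1.1.subset_ground ?_
    rw [(hFmod M.mRk le_rfl).2]
    exact le_rfl
  have hexists : ∃ i, i ≤ M.mRk ∧ C ⊆ F i := ⟨M.mRk, le_rfl, hFtop ▸ hCE⟩
  obtain ⟨i₀, hi₀le, hCFi, hmin⟩ : ∃ i, i ≤ M.mRk ∧ C ⊆ F i ∧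
      ∀ k < i, ¬(k ≤ M.mRk ∧ C ⊆ F k) :=
    ⟨Nat.find hexists, (Nat.find_spec hexists).1, (Nat.find_spec hexists).2,
      fun k hk => Nat.find_min hexists hk⟩
  have hi₀pos : 0 < i₀ := by
    rcases Nat.eq_zero_or_pos i₀ with h | h
    swap
    · exact h
    · exfalso
      have hC0 : C ⊆ F 0 := h ▸ hCFi
      have h1 : M.mRank C ≤ M.mRank (F 0) := mRank_mono hC0
      rw [hrC, (hFmod 0 (Nat.zero_le _)).2] at h1
      omega
  obtain ⟨j, hi₀eq⟩ : ∃ j, i₀ = j + 1 := ⟨i₀ - 1, by omega⟩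
  have hjlt : j < i₀ := by omega
  have hjle : j ≤ M.mRk := by omega
  have hnotC : ¬ C ⊆ F j := fun h => hmin j hjlt ⟨hjle, h⟩
  have hFjflat : M.IsFlat (F j) := (hFmod j hjle).1.1
  have hFjrank : M.mRank (F j) = j := (hFmod j hjle).2
  have hFsub : F j ⊆ F i₀ := by
    have := hFchain j (lt_of_lt_of_le hjlt hi₀le)
    rwa [← hi₀eq] at this
  -- pick x and y in C outside F j
  obtain ⟨x, hxC, hxFj⟩ := not_subset.1 hnotC
  have hxE : x ∈ M.E := hCE hxC
  obtain ⟨y, hyC, hyFj, hyx⟩ : ∃ y ∈ C, y ∉ F j ∧ y ≠ x := by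
    by_contra h
    push_neg at h
    have hsub2 : C \ {x} ⊆ F j := by
      intro c hc
      by_contra hcF
      exact hc.2 (h c hc.1 hcF)
    have hx2 := M.closure_subset_closure hsub2 (hmem_cl x hxC)
    rw [hFjflat.closure] at hx2
    exact hxFj hx2
  have hyE : y ∈ M.E := hCE hyC
  have hxy : x ≠ y := hyx.symm
  set B := C \ {x, y} with hBdef
  have hBC : B ⊆ C := diff_subset
  have hBE : B ⊆ M.E := hBC.trans hCE
  have hBcard : B.ncard = C.ncard - 2 := by
    rw [hBdef, Set.ncard_diff (Set.pair_subset hxC hyC), Set.ncard_pair hxy]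
  have hBssub : B ⊂ C := (ssubset_iff_of_subset hBC).2 ⟨x, hxC, by simp [hBdef]⟩
  have hB_indep : M.Indep B := hC.2.2 B hBssub
  have hxy_indep : M.Indep {x, y} := by
    obtain ⟨c, hcB⟩ := Set.nonempty_of_ncard_ne_zero (s := B) (by omega)
    refine hC.2.2 _ ((ssubset_iff_of_subset (Set.pair_subset hxC hyC)).2
      ⟨c, hBC hcB, hcB.2⟩)
  -- the line L
  set L := M.closure {x, y} with hLdef
  have hLflat : M.IsFlat L := M.flat_closure' _
  have hLE : L ⊆ M.E := hLflat.subset_ground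
  have hpairE : ({x, y} : Set α) ⊆ M.E := Set.pair_subset hxE hyE
  have hxL : x ∈ L := M.mem_closure_of_mem (by simp) hpairE
  have hyL : y ∈ L := M.mem_closure_of_mem (by simp) hpairE
  have hrL : M.mRank L = 2 := by
    rw [hLdef, mRank_closure_eq, hxy_indep.mRank_eq, Set.ncard_pair hxy]
  -- find a third point z on L using modularity of F j
  have hLFi : L ⊆ F i₀ := by
    have h1 : M.closure {x, y} ⊆ M.closure (F i₀) :=
      M.closure_subset_closure (Set.pair_subset (hCFi hxC) (hCFi hyC))
    rwa [(hFmod i₀ hi₀le).1.1.closure] at h1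
  have hub : M.mRank (F j ∪ L) ≤ i₀ := by
    have := mRank_mono (M := M) (union_subset hFsub hLFi)
    rwa [(hFmod i₀ hi₀le).2] at this
  have hlb : j + 1 ≤ M.mRank (F j ∪ L) := by
    have h1 : insert x (F j) ⊆ F j ∪ L := insert_subset (Or.inr hxL) subset_union_left
    have h2 : M.mRank (insert x (F j)) = M.mRank (F j) + 1 := by
      refine mRank_insert_of_not_mem_closure hFjflat.subset_ground hxE ?_
      rw [hFjflat.closure]
      exact hxFj
    have h3 := mRank_mono (M := M) h1
    omega
  have hrFjL : M.mRank (F j ∩ L) = 1 := by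
    have hmod := (hFmod j hjle).1.2 L hLflat
    rw [hFjrank, hrL] at hmod
    omega
  obtain ⟨z, hzmem, hz_indep⟩ :=
    exists_nonloop_of_one_le_mRank (M := M) (X := F j ∩ L) (le_of_eq hrFjL.symm)
  have hzFj : z ∈ F j := hzmem.1
  have hzL : z ∈ L := hzmem.2
  have hzE : z ∈ M.E := hz_indep.subset_ground (by simp)
  have hzx : z ≠ x := fun h => hxFj (h ▸ hzFj)
  have hzy : z ≠ y := fun h => hyFj (h ▸ hzFj)
  have hclz_sub : M.closure {z} ⊆ F j := by
    have := M.closure_subset_closure (singleton_subset_iff.2 hzFj)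
    rwa [hFjflat.closure] at this
  have hxz_indep : M.Indep {x, z} := by
    have h1 : M.Indep (insert x {z}) :=
      (hz_indep.insert_indep_iff_of_notMem (by simp [hzx.symm])).2
        ⟨hxE, fun h => hxFj (hclz_sub h)⟩
    exact h1
  have hyz_indep : M.Indep {y, z} := by
    have h1 : M.Indep (insert y {z}) :=
      (hz_indep.insert_indep_iff_of_notMem (by simp [hzy.symm])).2
        ⟨hyE, fun h => hyFj (hclz_sub h)⟩
    exact h1
  have hclxz : M.closure {x, z} = L := by
    refine Flat.eq_of_subset_of_mRank_le (M.flat_closure' _) hLflat ?_ ?_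
    · have h1 : M.closure {x, z} ⊆ M.closure L :=
        M.closure_subset_closure (Set.pair_subset hxL hzL)
      rwa [hLflat.closure] at h1
    · rw [hrL, mRank_closure_eq, hxz_indep.mRank_eq, Set.ncard_pair hzx.symm]
  have hclyz : M.closure {y, z} = L := by
    refine Flat.eq_of_subset_of_mRank_le (M.flat_closure' _) hLflat ?_ ?_
    · have h1 : M.closure {y, z} ⊆ M.closure L :=
        M.closure_subset_closure (Set.pair_subset hyL hzL)
      rwa [hLflat.closure] at h1
    · rw [hrL, mRank_closure_eq, hyz_indep.mRank_eq, Set.ncard_pair hzy.symm]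
  -- L is a round flat, hence modular by saturation
  have key : ∀ G, (M ↾ L).IsFlat G → ∀ a ∈ G, ∀ b ∈ G, M.closure {a, b} = L → G = L := by
    intro G hG a ha b hb hab
    have hGL : G ⊆ L := hG.subset_ground
    have hpab : ({a, b} : Set α) ⊆ L := Set.pair_subset (hGL ha) (hGL hb)
    obtain ⟨I, hI⟩ := M.exists_isBasis {a, b} (hpab.trans hLE)
    have hclI : M.closure I = L := by rw [hI.closure_eq_closure, hab]
    have hIL : M.IsBasis I L :=
      hI.indep.isBasis_of_subset_of_subset_closure (hI.subset.trans hpab) hclI.ge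
    have hIG : M.IsBasis I G :=
      hI.indep.isBasis_of_subset_of_subset_closure
        (hI.subset.trans (Set.pair_subset ha hb)) (hGL.trans hclI.ge)
    have h1 : (M ↾ L).IsBasis I G := (isBasis_restrict_iff hLE).2 ⟨hIG, hGL⟩
    have h2 : (M ↾ L).IsBasis I L := (isBasis_restrict_iff hLE).2 ⟨hIL, subset_rfl⟩
    exact hGL.antisymm (hG.subset_of_isBasis_of_isBasis h1 h2)
  have hround : M.RoundSet L := by
    refine ⟨hLE, ?_⟩
    rintro G₁ G₂ ⟨⟨hG₁, hG₁ne0⟩, ⟨hG₂, hG₂ne0⟩, huni0⟩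
    have hG₁ne : G₁ ≠ L := hG₁ne0
    have hG₂ne : G₂ ≠ L := hG₂ne0
    have huni : G₁ ∪ G₂ = L := huni0
    have hxmem : x ∈ G₁ ∪ G₂ := by rw [huni]; exact hxL
    have hymem : y ∈ G₁ ∪ G₂ := by rw [huni]; exact hyL
    have hzmem' : z ∈ G₁ ∪ G₂ := by rw [huni]; exact hzL
    rcases hxmem with hx1 | hx2 <;> rcases hymem with hy1 | hy2
    · exact hG₁ne (key G₁ hG₁ x hx1 y hy1 hLdef.symm)
    · rcases hzmem' with hz1 | hz2
      · exact hG₁ne (key G₁ hG₁ x hx1 z hz1 hclxz)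
      · exact hG₂ne (key G₂ hG₂ y hy2 z hz2 hclyz)
    · rcases hzmem' with hz1 | hz2
      · exact hG₁ne (key G₁ hG₁ y hy1 z hz1 hclyz)
      · exact hG₂ne (key G₂ hG₂ x hx2 z hz2 hclxz)
    · exact hG₂ne (key G₂ hG₂ x hx2 y hy2 hLdef.symm)
  have hLmod := hsat L hLflat hround
  -- intersect L with the closure of B to find the chord z'
  set K := M.closure B with hKdef
  have hKflat : M.IsFlat K := M.flat_closure' _
  have hrK : M.mRank K = C.ncard - 2 := by
    rw [hKdef, mRank_closure_eq, hB_indep.mRank_eq, hBcard]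
  have hub2 : M.mRank (L ∪ K) ≤ C.ncard - 1 := by
    have h1 : L ∪ K ⊆ M.closure C :=
      union_subset (M.closure_subset_closure (Set.pair_subset hxC hyC))
        (M.closure_subset_closure hBC)
    have h2 := mRank_mono (M := M) h1
    rwa [mRank_closure_eq, hrC] at h2
  have hlb2 : C.ncard - 1 ≤ M.mRank (L ∪ K) := by
    have h1 : C ⊆ L ∪ K := by
      intro c hc
      by_cases hcx : c = x
      · exact Or.inl (hcx ▸ hxL)
      by_cases hcy : c = y
      · exact Or.inl (hcy ▸ hyL)
      · exact Or.inr (M.mem_closure_of_mem ⟨hc, by simp [hcx, hcy]⟩ hBE)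
    have h2 := mRank_mono (M := M) h1
    rwa [hrC] at h2
  have hrLK : M.mRank (L ∩ K) = 1 := by
    have hmod := hLmod.2 K hKflat
    rw [hrL, hrK] at hmod
    omega
  obtain ⟨z', hz'mem, hz'_indep⟩ :=
    exists_nonloop_of_one_le_mRank (M := M) (X := L ∩ K) (le_of_eq hrLK.symm)
  have hz'L : z' ∈ L := hz'mem.1
  have hz'K : z' ∈ K := hz'mem.2
  have hz'E : z' ∈ M.E := hz'_indep.subset_ground (by simp)
  have hclz'_sub : M.closure {z'} ⊆ K := by
    have := M.closure_subset_closure (singleton_subset_iff.2 hz'K)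
    rwa [hKflat.closure] at this
  -- z' is not in C
  have hxK : x ∉ K := by
    intro h
    have hdep : M.Dep (insert x B) := hB_indep.insert_dep_iff.2 ⟨h, by simp [hBdef]⟩
    have hsub : insert x B ⊆ C \ {y} := by
      rintro c (rfl | hcB)
      · exact ⟨hxC, by simp [hxy]⟩
      · refine ⟨hcB.1, ?_⟩
        have h2 := hcB.2
        simp only [mem_insert_iff, mem_singleton_iff, not_or] at h2
        simp [h2.2]
    exact hdep.not_indep ((hdiff_indep y hyC).subset hsub)
  have hyK : y ∉ K := by
    intro h
    have hdep : M.Dep (insert y B) := hB_indep.insert_dep_iff.2 ⟨h, by simp [hBdef]⟩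
    have hsub : insert y B ⊆ C \ {x} := by
      rintro c (rfl | hcB)
      · exact ⟨hyC, by simp [hyx]⟩
      · refine ⟨hcB.1, ?_⟩
        have h2 := hcB.2
        simp only [mem_insert_iff, mem_singleton_iff, not_or] at h2
        simp [h2.1]
    exact hdep.not_indep ((hdiff_indep x hxC).subset hsub)
  have hz'x : z' ≠ x := fun h => hxK (h ▸ hz'K)
  have hz'y : z' ≠ y := fun h => hyK (h ▸ hz'K)
  have hz'B : z' ∉ B := by
    intro h
    have hdep : M.Dep (insert z' {x, y}) :=
      hxy_indep.insert_dep_iff.2 ⟨hz'L, by simp [hz'x, hz'y]⟩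
    have hne : (B \ {z'}).Nonempty := by
      refine Set.nonempty_of_ncard_ne_zero ?_
      rw [Set.ncard_diff_singleton_of_mem h]
      omega
    obtain ⟨c, hcB, hcz'⟩ := hne
    have hssub : insert z' {x, y} ⊂ C := by
      refine (ssubset_iff_of_subset (insert_subset (hBC h) (Set.pair_subset hxC hyC))).2
        ⟨c, hBC hcB, ?_⟩
      simp only [mem_insert_iff, mem_singleton_iff]
      push_neg
      refine ⟨hcz', fun h' => hcB.2 (by simp [h']), fun h' => hcB.2 (by simp [h'])⟩
    exact hdep.not_indep (hC.2.2 _ hssub)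
  have hz'C : z' ∉ C := by
    intro h
    rcases eq_or_ne z' x with h1 | h1
    · exact hz'x h1
    rcases eq_or_ne z' y with h2 | h2
    · exact hz'y h2
    · exact hz'B ⟨h, by simp [h1, h2]⟩
  have hxclz' : x ∉ M.closure {z'} := fun h => hxK (hclz'_sub h)
  have hyclz' : y ∉ M.closure {z'} := fun h => hyK (hclz'_sub h)
  -- the triangle {x, y, z'}
  have hTdep : M.Dep (insert z' {x, y}) :=
    hxy_indep.insert_dep_iff.2 ⟨hz'L, by simp [hz'x, hz'y]⟩
  have hTeq : insert z' {x, y} = ({x, y, z'} : Set α) := by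
    ext c; simp only [mem_insert_iff, mem_singleton_iff]; tauto
  have hTdep' : M.Dep ({x, y, z'} : Set α) := hTeq ▸ hTdep
  have hxz'_indep : M.Indep {x, z'} :=
    (hz'_indep.insert_indep_iff_of_notMem (by simp [hz'x.symm])).2 ⟨hxE, hxclz'⟩
  have hyz'_indep : M.Indep {y, z'} :=
    (hz'_indep.insert_indep_iff_of_notMem (by simp [hz'y.symm])).2 ⟨hyE, hyclz'⟩
  have hTcirc : M.Circ {x, y, z'} := by
    refine circ_of_forall_diff
      (insert_subset hxE (insert_subset hyE (singleton_subset_iff.2 hz'E)))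
      hTdep'.not_indep ?_
    intro s hs
    simp only [mem_insert_iff, mem_singleton_iff] at hs
    rcases hs with rfl | rfl | rfl
    · refine hyz'_indep.subset ?_
      intro t ht
      simp only [mem_diff, mem_insert_iff, mem_singleton_iff] at ht
      simp only [mem_insert_iff, mem_singleton_iff]
      tauto
    · refine hxz'_indep.subset ?_
      intro t ht
      simp only [mem_diff, mem_insert_iff, mem_singleton_iff] at ht
      simp only [mem_insert_iff, mem_singleton_iff]
      tauto
    · refine hxy_indep.subset ?_
      intro t ht
      simp only [mem_diff, mem_insert_iff, mem_singleton_iff] at ht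
      simp only [mem_insert_iff, mem_singleton_iff]
      tauto
  have hycl : y ∈ M.closure {x, z'} := by
    by_contra h
    have hind : M.Indep (insert y {x, z'}) :=
      (hxz'_indep.insert_indep_iff_of_notMem (by simp [hxy.symm, hz'y.symm])).2 ⟨hyE, h⟩
    have hset : insert y {x, z'} = ({x, y, z'} : Set α) := by
      ext c; simp only [mem_insert_iff, mem_singleton_iff]; tauto
    rw [hset] at hind
    exact hTdep'.not_indep hind
  -- the big circuit insert z' B
  have hDcirc : M.Circ (insert z' B) := by
    refine circ_of_forall_diff (insert_subset hz'E hBE)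
      (hB_indep.insert_dep_iff.2 ⟨hz'K, hz'B⟩).not_indep ?_
    rintro s (rfl | hsB)
    · refine hB_indep.subset ?_
      intro t ht
      rcases ht.1 with rfl | htB
      · exact absurd rfl ht.2
      · exact htB
    · have hsx : s ≠ x := fun h => hsB.2 (by simp [h])
      have hsy : s ≠ y := fun h => hsB.2 (by simp [h])
      have hsz' : z' ≠ s := fun h => hz'B (h ▸ hsB)
      by_contra hdep
      have h1 : insert z' B \ {s} = insert z' (B \ {s}) :=
        (Set.insert_diff_singleton_comm hsz' B).symm
      rw [h1] at hdep
      have hBs_indep : M.Indep (B \ {s}) := hB_indep.subset diff_subset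
      have hz'cl : z' ∈ M.closure (B \ {s}) := by
        by_contra hh
        exact hdep ((hBs_indep.insert_indep_iff_of_notMem (by simp [hz'B])).2 ⟨hz'E, hh⟩)
      have hBsE : B \ {s} ⊆ M.E := (diff_subset).trans hBE
      have hsubS : ({x, z'} : Set α) ⊆ M.closure (insert x (B \ {s})) :=
        Set.pair_subset (M.mem_closure_of_mem (mem_insert _ _) (insert_subset hxE hBsE))
          (M.closure_subset_closure (subset_insert _ _) hz'cl)
      have hycl2 : y ∈ M.closure (insert x (B \ {s})) :=
        closure_subset_closure_of_subset_closure hsubS hycl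
      have hsub3 : insert x (B \ {s}) ⊆ (C \ {s}) \ {y} := by
        rintro t (rfl | ⟨htB, hts⟩)
        · exact ⟨⟨hxC, by simp [hsx.symm]⟩, by simp [hxy]⟩
        · refine ⟨⟨htB.1, by simpa using hts⟩, ?_⟩
          simp only [mem_singleton_iff]
          exact fun h => htB.2 (by simp [h])
      have hycl3 : y ∈ M.closure ((C \ {s}) \ {y}) := M.closure_subset_closure hsub3 hycl2
      exact (hdiff_indep s (hBC hsB)).notMem_closure_diff_of_mem ⟨hyC, by simp [hsy.symm]⟩ hycl3
  -- assemble
  have hDcirc' : M.Circ (insert z' {x, y}) := by rw [hTeq]; exact hTcirc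
  exact ⟨⟨x, hxC, y, hyC, hxy, z', hz'C, hTcirc, hDcirc⟩,
    ⟨z', hz'C, {x, y}, B, Set.union_diff_cancel (Set.pair_subset hxC hyC),
      Set.disjoint_sdiff_right, hDcirc', hDcirc⟩⟩
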